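/- Let T^N be the torus, φ : T^N → ℝ three times continuously differentiable and u : T^N → ℝ^N continuously differentiable. Then ∫_{T^N} (Δφ ∇φ)·u dx = − ∫_{T^N} (∇φ ⊗ ∇φ − (|∇φ|²/2)·I_N) : ∇u dx, where A : B = ∑_{ij} A_{ij} B_{ij}. -/

import Mathlib

open MeasureTheory

/-- Partial derivative in direction `j`. -/
noncomputable def pd {N : ℕ} (j : Fin N) (f : (Fin N → ℝ) → ℝ) (x : Fin N → ℝ) : ℝ :=
  fderiv ℝ f x (Pi.single j 1)

/-- Laplacian. -/
noncomputable def lap {N : ℕ} (f : (Fin N → ℝ) → ℝ) (x : Fin N → ℝ) : ℝ :=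
  ∑ j, pd j (pd j f) x

/-- Fundamental domain `[0,1]^N` of the torus `T^N = ℝ^N/ℤ^N`. -/
def Box (N : ℕ) : Set (Fin N → ℝ) := Set.univ.pi fun _ => Set.Icc (0:ℝ) 1

/-- `f` is `1`-periodic in each coordinate, i.e. a function on the torus `T^N`. -/
def ZPeriodic {N : ℕ} {E : Type*} (f : (Fin N → ℝ) → E) : Prop :=
  ∀ (x : Fin N → ℝ) (j : Fin N), f (x + Pi.single j 1) = f x


variable {N : ℕ}

lemma contDiff_pd {n m : WithTop ℕ∞} (j : Fin N) {f : (Fin N → ℝ) → ℝ}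
    (hf : ContDiff ℝ n f) (h : m + 1 ≤ n) : ContDiff ℝ m (pd j f) :=
  (hf.fderiv_right h).clm_apply contDiff_const

lemma pd_mul {f g : (Fin N → ℝ) → ℝ} {x : Fin N → ℝ} (j : Fin N)
    (hf : DifferentiableAt ℝ f x) (hg : DifferentiableAt ℝ g x) :
    pd j (fun y => f y * g y) x = pd j f x * g x + f x * pd j g x := by
  unfold pd
  rw [fderiv_fun_mul hf hg]
  simp [mul_comm]
  ring

lemma pd_sub {f g : (Fin N → ℝ) → ℝ} {x : Fin N → ℝ} (j : Fin N)
    (hf : DifferentiableAt ℝ f x) (hg : DifferentiableAt ℝ g x) :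
    pd j (fun y => f y - g y) x = pd j f x - pd j g x := by
  unfold pd
  rw [fderiv_fun_sub hf hg]
  simp

lemma pd_sum {ι : Type*} (s : Finset ι) {f : ι → (Fin N → ℝ) → ℝ} {x : Fin N → ℝ} (j : Fin N)
    (hf : ∀ i ∈ s, DifferentiableAt ℝ (f i) x) :
    pd j (fun y => ∑ i ∈ s, f i y) x = ∑ i ∈ s, pd j (f i) x := by
  unfold pd
  rw [fderiv_fun_sum hf]
  simp

lemma pd_div_const {f : (Fin N → ℝ) → ℝ} {x : Fin N → ℝ} (j : Fin N) (c : ℝ)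
    (hf : DifferentiableAt ℝ f x) :
    pd j (fun y => f y / c) x = pd j f x / c := by
  unfold pd
  simp only [div_eq_mul_inv, fderiv_mul_const hf]
  simp [mul_comm]

lemma pd_comm {n : WithTop ℕ∞} {f : (Fin N → ℝ) → ℝ} (hf : ContDiff ℝ n f) (hn : 2 ≤ n)
    (i j : Fin N) (x : Fin N → ℝ) : pd i (pd j f) x = pd j (pd i f) x := by
  have hd : DifferentiableAt ℝ (fderiv ℝ f) x :=
    ((hf.fderiv_right (m := 1) (le_trans (by norm_num) hn)).differentiable one_ne_zero).differentiableAt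
  have key : ∀ v w : Fin N → ℝ, fderiv ℝ (fun y => fderiv ℝ f y w) x v
      = fderiv ℝ (fderiv ℝ f) x v w := by
    intro v w
    rw [fderiv_clm_apply hd (differentiableAt_const w)]
    simp
  have hsymm := (hf.contDiffAt (x := x)).isSymmSndFDerivAt (by simpa [minSmoothness_of_isRCLikeNormedField] using hn)
  unfold pd
  rw [key, key, hsymm]

lemma ZPeriodic.pd_periodic {f : (Fin N → ℝ) → ℝ} (hp : ZPeriodic f)
    (hf : Differentiable ℝ f) (i : Fin N) : ZPeriodic (pd i f) := by
  intro x j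
  unfold pd
  congr 1
  have h1 : HasFDerivAt (fun y : Fin N → ℝ => y + Pi.single j 1)
      (ContinuousLinearMap.id ℝ _) x := (hasFDerivAt_id x).add_const _
  have h2 := (hf (x + Pi.single j 1)).hasFDerivAt.comp x h1
  simp only [ContinuousLinearMap.comp_id, Function.comp_def] at h2
  have h3 : (fun y => f (y + Pi.single j 1)) = f := funext fun y => hp y j
  rw [h3] at h2
  exact h2.fderiv.symm


lemma Box_eq_Icc : Box N = Set.Icc (0 : Fin N → ℝ) 1 := by
  rw [← Set.pi_univ_Icc]
  rfl

lemma integral_pd_eq_zero (j : Fin N) {g : (Fin N → ℝ) → ℝ}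
    (hg : ContDiff ℝ 1 g) (hgp : ZPeriodic g) :
    ∫ x in Box N, pd j g x = 0 := by
  have hN : 0 < N := j.pos
  obtain ⟨n, rfl⟩ : ∃ n, N = n + 1 := ⟨N - 1, by omega⟩
  rw [Box_eq_Icc]
  have hcont : Continuous (pd j g) :=
    (contDiff_pd (m := 0) j hg (by norm_num)).continuous
  have key := MeasureTheory.integral_divergence_of_hasFDerivAt_off_countable'
    (0 : Fin (n+1) → ℝ) 1 (by intro i; norm_num)
    (fun i x => if i = j then g x else 0)
    (fun i x => if i = j then fderiv ℝ g x else 0)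
    ∅ Set.countable_empty
    (by
      intro i
      by_cases h : i = j <;> simp [h]
      · exact hg.continuous.continuousOn
      · exact continuousOn_const)
    (by
      intro x _ i
      by_cases h : i = j <;> simp [h]
      · exact ((hg.differentiable one_ne_zero) x).hasFDerivAt
      · exact hasFDerivAt_const 0 x)
    (by
      have : (fun x : Fin (n+1) → ℝ => ∑ i, (if i = j then fderiv ℝ g x else 0) (Pi.single i 1))
          = pd j g := by
        funext x
        rw [Finset.sum_eq_single j]
        · simp [pd]
        · intro b _ hb; simp [hb]
        · simp
      rw [this]
      exact hcont.continuousOn.integrableOn_compact isCompact_Icc)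
  have lhs_eq : (fun x : Fin (n+1) → ℝ =>
      ∑ i, (if i = j then fderiv ℝ g x else 0) (Pi.single i 1)) = pd j g := by
    funext x
    rw [Finset.sum_eq_single j]
    · simp [pd]
    · intro b _ hb; simp [hb]
    · simp
  rw [show (∫ x in Set.Icc (0:Fin (n+1) → ℝ) 1, pd j g x)
      = ∫ x in Set.Icc (0:Fin (n+1) → ℝ) 1,
          ∑ i, (if i = j then fderiv ℝ g x else 0) (Pi.single i 1) by rw [lhs_eq]]
  rw [key]
  apply Finset.sum_eq_zero
  intro i _
  by_cases h : i = j
  · subst h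
    have hins : ∀ x : Fin n → ℝ, (Fin.insertNth i ((1 : Fin (n+1) → ℝ) i) x : Fin (n+1) → ℝ)
        = (Fin.insertNth i ((0 : Fin (n+1) → ℝ) i) x : Fin (n+1) → ℝ) + Pi.single i 1 := by
      intro x
      funext k
      rcases eq_or_ne k i with rfl | hk
      · simp
      · obtain ⟨m, rfl⟩ := Fin.exists_succAbove_eq hk
        simp [Pi.single_eq_of_ne (Fin.succAbove_ne i m)]
    simp only [if_pos rfl, hins]
    rw [sub_eq_zero]
    congr 1
    funext x
    exact hgp _ i
  · simp [h]

lemma pd_sq {f : (Fin N → ℝ) → ℝ} {x : Fin N → ℝ} (j : Fin N)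
    (hf : DifferentiableAt ℝ f x) :
    pd j (fun y => f y ^ 2) x = 2 * (f x * pd j f x) := by
  have h : (fun y => f y ^ 2) = fun y => f y * f y := by funext y; ring
  rw [h, pd_mul j hf hf]; ring


/-- Capillary stress identity on the torus:
`∫ (Δφ∇φ)·u = −∫ (∇φ⊗∇φ − (|∇φ|²/2)I) : ∇u`. -/
theorem capillary_stress_identity (N : ℕ) (φ : (Fin N → ℝ) → ℝ)
    (u : (Fin N → ℝ) → (Fin N → ℝ))
    (hφ : ContDiff ℝ 3 φ) (hu : ContDiff ℝ 1 u)
    (hφp : ZPeriodic φ) (hup : ZPeriodic u) :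
    (∫ x in Box N, lap φ x * (∑ i, pd i φ x * u x i))
      = -∫ x in Box N, ∑ i, ∑ j,
          (pd i φ x * pd j φ x - (if i = j then (∑ k, (pd k φ x) ^ 2) / 2 else 0))
            * pd j (fun y => u y i) x := by
  classical
  -- smoothness facts
  have hP2 : ∀ k, ContDiff ℝ 2 (pd k φ) := fun k => contDiff_pd k hφ (by norm_num)
  have hP1 : ∀ k : Fin N, ContDiff ℝ 1 (pd k φ) := fun k => (hP2 k).of_le (by norm_num)
  have hPd : ∀ (k : Fin N) x, DifferentiableAt ℝ (pd k φ) x :=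
    fun k x => ((hP1 k).differentiable (by norm_num) x)
  have hU : ∀ i : Fin N, ContDiff ℝ 1 (fun y => u y i) := fun i =>
    (ContinuousLinearMap.proj (R := ℝ) (φ := fun _ : Fin N => ℝ) i).contDiff.comp hu
  have hUd : ∀ (i : Fin N) x, DifferentiableAt ℝ (fun y => u y i) x :=
    fun i x => ((hU i).differentiable one_ne_zero x)
  set T : Fin N → Fin N → ((Fin N → ℝ) → ℝ) := fun i j y =>
    pd i φ y * pd j φ y - (if i = j then (∑ k, (pd k φ y) ^ 2) / 2 else 0) with hTdef
  set F : Fin N → Fin N → ((Fin N → ℝ) → ℝ) := fun i j y => T i j y * u y i with hFdef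
  have hQ1 : ∀ i j : Fin N,
      ContDiff ℝ 1 (fun y => if i = j then (∑ k, (pd k φ y) ^ 2) / 2 else 0) := by
    intro i j
    by_cases hij : i = j
    · simp only [if_pos hij]
      exact (ContDiff.sum fun k _ => (hP1 k).pow 2).div_const 2
    · simp only [if_neg hij]
      exact contDiff_const
  have hT1 : ∀ i j, ContDiff ℝ 1 (T i j) := fun i j =>
    ((hP1 i).mul (hP1 j)).sub (hQ1 i j)
  have hTd : ∀ (i j : Fin N) x, DifferentiableAt ℝ (T i j) x :=
    fun i j x => ((hT1 i j).differentiable one_ne_zero x)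
  have hF1 : ∀ i j, ContDiff ℝ 1 (F i j) := fun i j => (hT1 i j).mul (hU i)
  have hPper : ∀ k : Fin N, ZPeriodic (pd k φ) :=
    fun k => hφp.pd_periodic (hφ.differentiable (by norm_num)) k
  have hFper : ∀ i j, ZPeriodic (F i j) := by
    intro i j x m
    have hp : ∀ k : Fin N, pd k φ (x + Pi.single m 1) = pd k φ x := fun k => hPper k x m
    simp only [hFdef, hTdef, hp, hup x m]
  -- pointwise identity
  have hkey : ∀ x, (∑ i, ∑ j, pd j (F i j) x)
      = lap φ x * (∑ i, pd i φ x * u x i)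
        + ∑ i, ∑ j, T i j x * pd j (fun y => u y i) x := by
    intro x
    have hA : ∀ i j, pd j (F i j) x
        = pd j (T i j) x * u x i + T i j x * pd j (fun y => u y i) x :=
      fun i j => pd_mul j (hTd i j x) (hUd i x)
    have h1 : ∀ i j : Fin N, pd j (T i j) x
        = pd j (pd i φ) x * pd j φ x + pd i φ x * pd j (pd j φ) x
          - (if i = j then (∑ k, pd k φ x * pd i (pd k φ) x) else 0) := by
      intro i j
      by_cases hij : i = j
      · subst hij
        have hmul : DifferentiableAt ℝ (fun y => pd i φ y * pd i φ y) x :=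
          (hPd i x).mul (hPd i x)
        have hsum : DifferentiableAt ℝ (fun y => ∑ k, (pd k φ y) ^ 2) x := by
          apply DifferentiableAt.fun_sum
          intro k _
          exact ((hP1 k).pow 2).differentiable one_ne_zero x
        have hdiv : DifferentiableAt ℝ (fun y => (∑ k, (pd k φ y) ^ 2) / 2) x :=
          by
          simp only [div_eq_mul_inv]
          exact hsum.mul_const _
        have e1 : pd i (T i i) x
            = pd i (fun y => pd i φ y * pd i φ y) x
              - pd i (fun y => (∑ k, (pd k φ y) ^ 2) / 2) x := by
          simp only [hTdef, if_pos rfl]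
          exact pd_sub i hmul hdiv
        rw [e1, pd_mul i (hPd i x) (hPd i x), pd_div_const i 2 hsum,
          pd_sum Finset.univ i (fun k _ => ((hP1 k).pow 2).differentiable one_ne_zero x)]
        rw [if_pos rfl]
        have e2 : (∑ k, pd i (fun y => pd k φ y ^ 2) x)
            = 2 * ∑ k, pd k φ x * pd i (pd k φ) x := by
          rw [Finset.mul_sum]
          exact Finset.sum_congr rfl fun k _ => pd_sq i (hPd k x)
        rw [e2]
        ring
      · have e1 : T i j = fun y => pd i φ y * pd j φ y - 0 := by
          simp only [hTdef, if_neg hij]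
        rw [e1, if_neg hij]
        have : pd j (fun y => pd i φ y * pd j φ y - 0) x
            = pd j (fun y => pd i φ y * pd j φ y) x := by
          simp only [sub_zero]
        rw [this, pd_mul j (hPd i x) (hPd j x), sub_zero]
    have hB : ∀ i, (∑ j, pd j (T i j) x) = lap φ x * pd i φ x := by
      intro i
      calc ∑ j, pd j (T i j) x
          = ∑ j : Fin N, (pd i (pd j φ) x * pd j φ x + pd i φ x * pd j (pd j φ) x
              - (if i = j then (∑ k, pd k φ x * pd i (pd k φ) x) else 0)) := by
            refine Finset.sum_congr rfl fun j _ => ?_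
            rw [h1 i j, ← pd_comm hφ (by norm_num) i j x]
        _ = (∑ j, pd i (pd j φ) x * pd j φ x) + pd i φ x * (∑ j, pd j (pd j φ) x)
              - ∑ j : Fin N, (if i = j then (∑ k, pd k φ x * pd i (pd k φ) x) else 0) := by
            rw [Finset.sum_sub_distrib, Finset.sum_add_distrib, Finset.mul_sum]
        _ = lap φ x * pd i φ x := by
            rw [Finset.sum_ite_eq]
            simp only [Finset.mem_univ, if_true]
            have e3 : (∑ j, pd i (pd j φ) x * pd j φ x)
                = ∑ k, pd k φ x * pd i (pd k φ) x :=
              Finset.sum_congr rfl fun k _ => mul_comm _ _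
            rw [e3, lap]
            ring
    calc ∑ i, ∑ j, pd j (F i j) x
        = ∑ i, ((∑ j, pd j (T i j) x) * u x i
            + ∑ j, T i j x * pd j (fun y => u y i) x) := by
          refine Finset.sum_congr rfl fun i _ => ?_
          rw [Finset.sum_congr rfl fun j _ => hA i j, Finset.sum_add_distrib,
            ← Finset.sum_mul]
      _ = ∑ i, (lap φ x * pd i φ x * u x i
            + ∑ j, T i j x * pd j (fun y => u y i) x) := by
          refine Finset.sum_congr rfl fun i _ => ?_
          rw [hB i]
      _ = lap φ x * (∑ i, pd i φ x * u x i)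
            + ∑ i, ∑ j, T i j x * pd j (fun y => u y i) x := by
          rw [Finset.sum_add_distrib, Finset.mul_sum]
          congr 1
          exact Finset.sum_congr rfl fun i _ => by ring
  -- integrability
  have hInt : ∀ i j : Fin N, IntegrableOn (fun x => pd j (F i j) x) (Box N) := by
    intro i j
    rw [Box_eq_Icc]
    exact ((contDiff_pd (m := 0) j (hF1 i j) (by norm_num)).continuous).continuousOn.integrableOn_compact
      isCompact_Icc
  have hDzero : ∫ x in Box N, (∑ i, ∑ j, pd j (F i j) x) = 0 := by
    rw [MeasureTheory.integral_finset_sum _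
      (fun i _ => MeasureTheory.integrable_finset_sum _ (fun j _ => hInt i j))]
    refine Finset.sum_eq_zero fun i _ => ?_
    rw [MeasureTheory.integral_finset_sum _ (fun j _ => hInt i j)]
    exact Finset.sum_eq_zero fun j _ => integral_pd_eq_zero j (hF1 i j) (hFper i j)
  have hBcont : Continuous (fun x => ∑ i, ∑ j, T i j x * pd j (fun y => u y i) x) := by
    apply continuous_finset_sum
    intro i _
    apply continuous_finset_sum
    intro j _
    exact ((hT1 i j).continuous).mul (contDiff_pd (m := 0) j (hU i) (by norm_num)).continuous
  have hBint : IntegrableOn (fun x => ∑ i, ∑ j, T i j x * pd j (fun y => u y i) x) (Box N) := by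
    rw [Box_eq_Icc]
    exact hBcont.continuousOn.integrableOn_compact isCompact_Icc
  have hDint : IntegrableOn (fun x => ∑ i, ∑ j, pd j (F i j) x) (Box N) :=
    MeasureTheory.integrable_finset_sum _
      (fun i _ => MeasureTheory.integrable_finset_sum _ (fun j _ => hInt i j))
  have hsplit : (fun x => lap φ x * (∑ i, pd i φ x * u x i))
      = fun x => (∑ i, ∑ j, pd j (F i j) x)
        - (∑ i, ∑ j, T i j x * pd j (fun y => u y i) x) := by
    funext x
    rw [hkey x]
    ring
  have hgoal : (fun x => ∑ i, ∑ j,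
      (pd i φ x * pd j φ x - (if i = j then (∑ k, (pd k φ x) ^ 2) / 2 else 0))
        * pd j (fun y => u y i) x)
      = fun x => ∑ i, ∑ j, T i j x * pd j (fun y => u y i) x := rfl
  rw [hsplit, hgoal, MeasureTheory.integral_sub hDint hBint, hDzero, zero_sub]
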